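/- Let r be the unique root in (0,1) of h(t) - 1 where h(t) = Σ_{k=1}^n b_k t^k has nonnegative real coefficients with Σ b_k > 1. Then r is the radius of convergence of any power series Σ a_k t^k with nonnegative integer coefficients a_k whose sum function equals P(t)/((t-1)(h(t)-1)) on its disk of convergence, for a polynomial P with P(0)=1 and P having no root in [0, r]. -/

import Mathlib

open Finset Polynomial

lemma poly_hasSum (Q : Polynomial ℝ) (x : ℝ) :
    HasSum (fun m => Q.coeff m * x ^ m) (Q.eval x) := by
  have hvan : ∀ m ∉ range (Q.natDegree + 1), Q.coeff m * x ^ m = 0 := by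
    intro m hm
    rw [Q.coeff_eq_zero_of_natDegree_lt (by simpa [Nat.lt_succ, not_lt] using hm), zero_mul]
  have := hasSum_sum_of_ne_finset_zero (L := SummationFilter.unconditional ℕ) hvan
  rwa [← Polynomial.eval_eq_sum_range] at this

lemma pow_coeff_nonneg {Q : Polynomial ℝ} (hQ : ∀ m, 0 ≤ Q.coeff m) :
    ∀ j m, 0 ≤ (Q ^ j).coeff m := by
  intro j
  induction j with
  | zero => intro m; rw [pow_zero, Polynomial.coeff_one]; split <;> norm_num
  | succ j ih =>
    intro m
    rw [pow_succ, Polynomial.coeff_mul]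
    exact Finset.sum_nonneg fun p _ => mul_nonneg (ih p.1) (hQ p.2)

lemma pow_coeff_zero {Q : Polynomial ℝ} (h0 : Q.coeff 0 = 0) :
    ∀ j m, m < j → (Q ^ j).coeff m = 0 := by
  intro j
  induction j with
  | zero => intro m hm; omega
  | succ j ih =>
    intro m hm
    rw [pow_succ, Polynomial.coeff_mul]
    apply Finset.sum_eq_zero
    intro p hp
    rw [Finset.HasAntidiagonal.mem_antidiagonal] at hp
    rcases lt_or_ge p.1 j with h | h
    · rw [ih p.1 h, zero_mul]
    · have : p.2 = 0 := by omega
      rw [this, h0, mul_zero]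

lemma e_hasSum {Q : Polynomial ℝ} (hQ : ∀ m, 0 ≤ Q.coeff m) (h0 : Q.coeff 0 = 0)
    {x t : ℝ} (hxt : |x| ≤ t) (ht : Q.eval t < 1) :
    HasSum (fun l => (∑ j ∈ Finset.range (l + 1), (Q ^ j).coeff l) * x ^ l)
      (1 - Q.eval x)⁻¹ := by
  have ht0 : 0 ≤ t := le_trans (abs_nonneg x) hxt
  have habs : ∀ j : ℕ, |(Q ^ j).eval x| ≤ (Q ^ j).eval t := by
    intro j
    rw [Polynomial.eval_eq_sum_range, Polynomial.eval_eq_sum_range]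
    refine (Finset.abs_sum_le_sum_abs _ _).trans (Finset.sum_le_sum fun i _ => ?_)
    rw [abs_mul, abs_of_nonneg (pow_coeff_nonneg hQ j i), abs_pow]
    exact mul_le_mul_of_nonneg_left (pow_le_pow_left₀ (abs_nonneg x) hxt i)
      (pow_coeff_nonneg hQ j i)
  have hτ0 : 0 ≤ Q.eval t := le_trans (abs_nonneg _) (by simpa using habs 1)
  have hq1 : |Q.eval x| < 1 := lt_of_le_of_lt (by simpa using habs 1) ht
  set F : ℕ × ℕ → ℝ := fun p => (Q ^ p.1).coeff p.2 * x ^ p.2 with hF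
  set G : ℕ × ℕ → ℝ := fun p => (Q ^ p.1).coeff p.2 * t ^ p.2 with hG
  have hGF : ∀ p, ‖F p‖ ≤ G p := by
    intro p
    rw [hF, hG]
    simp only [Real.norm_eq_abs, abs_mul, abs_of_nonneg (pow_coeff_nonneg hQ p.1 p.2), abs_pow]
    exact mul_le_mul_of_nonneg_left (pow_le_pow_left₀ (abs_nonneg x) hxt p.2)
      (pow_coeff_nonneg hQ p.1 p.2)
  have hFslice : ∀ j, HasSum (fun l => F (j, l)) ((Q.eval x) ^ j) := by
    intro j
    simpa [hF, Polynomial.eval_pow] using poly_hasSum (Q ^ j) x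
  have hGslice : ∀ j, HasSum (fun l => G (j, l)) ((Q.eval t) ^ j) := by
    intro j
    simpa [hG, Polynomial.eval_pow] using poly_hasSum (Q ^ j) t
  have hGnonneg : ∀ p, 0 ≤ G p := fun p =>
    mul_nonneg (pow_coeff_nonneg hQ p.1 p.2) (pow_nonneg ht0 p.2)
  have hGsum : Summable G := by
    refine (summable_prod_of_nonneg hGnonneg).mpr ⟨fun j => (hGslice j).summable, ?_⟩
    exact (summable_geometric_of_lt_one hτ0 ht).congr fun j => ((hGslice j).tsum_eq).symm
  have hFsum : Summable F := Summable.of_norm_bounded hGsum hGF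
  have htot : ∑' p, F p = (1 - Q.eval x)⁻¹ := by
    rw [hFsum.tsum_prod, tsum_congr (fun j => (hFslice j).tsum_eq),
      tsum_geometric_of_abs_lt_one hq1]
  have hFl : ∀ l, HasSum (fun j => F (j, l))
      ((∑ j ∈ Finset.range (l + 1), (Q ^ j).coeff l) * x ^ l) := by
    intro l
    have hvan : ∀ j ∉ range (l + 1), F (j, l) = 0 := by
      intro j hj
      have hlj : l < j := by simpa [Nat.lt_succ, not_lt] using hj
      show (Q ^ j).coeff l * x ^ l = 0
      rw [pow_coeff_zero h0 j l hlj, zero_mul]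
    have h2 := hasSum_sum_of_ne_finset_zero (L := SummationFilter.unconditional ℕ) hvan
    have heq : (∑ b ∈ range (l + 1), F (b, l))
        = (∑ j ∈ Finset.range (l + 1), (Q ^ j).coeff l) * x ^ l := by
      rw [Finset.sum_mul]
    exact heq ▸ h2
  have hGmarg : Summable (fun l => ∑' j, G (j, l)) := by
    have hswap : Summable (fun p : ℕ × ℕ => G p.swap) := hGsum.prod_symm
    exact ((summable_prod_of_nonneg (fun p => hGnonneg p.swap)).mp hswap).2
  have hGl : ∀ l, Summable (fun j => G (j, l)) := fun l => hGsum.prod_symm.prod_factor l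
  have hFnorml : ∀ l, Summable (fun j => ‖F (j, l)‖) := fun l =>
    Summable.of_nonneg_of_le (fun j => norm_nonneg _) (fun j => hGF (j, l)) (hGl l)
  have htarget : Summable (fun l => (∑ j ∈ Finset.range (l + 1), (Q ^ j).coeff l) * x ^ l) := by
    refine Summable.of_norm_bounded hGmarg fun l => ?_
    rw [← (hFl l).tsum_eq]
    exact (norm_tsum_le_tsum_norm (hFnorml l)).trans
      ((hFnorml l).tsum_le_tsum (fun j => hGF (j, l)) (hGl l))
  have hval : ∑' l, (∑ j ∈ Finset.range (l + 1), (Q ^ j).coeff l) * x ^ l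
      = (1 - Q.eval x)⁻¹ := by
    calc ∑' l, (∑ j ∈ Finset.range (l + 1), (Q ^ j).coeff l) * x ^ l
        = ∑' l, ∑' j, F (j, l) := tsum_congr fun l => ((hFl l).tsum_eq).symm
      _ = ∑' p : ℕ × ℕ, F p.swap := (hFsum.prod_symm.tsum_prod).symm
      _ = ∑' p, F p := (Equiv.prodComm ℕ ℕ).tsum_eq F
      _ = (1 - Q.eval x)⁻¹ := htot
  exact hval ▸ htarget.hasSum

open FormalMultilinearSeries in
lemma coeff_unique {c d : ℕ → ℝ} {ε : ℝ} (hε : 0 < ε)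
    (h : ∀ x : ℝ, |x| < ε → ∃ S, HasSum (fun m => c m * x ^ m) S ∧
      HasSum (fun m => d m * x ^ m) S) :
    c = d := by
  have h2 : (0:ℝ) < ε / 2 := by linarith
  have key : ∀ (c : ℕ → ℝ), (∀ x : ℝ, |x| < ε → Summable (fun m => c m * x ^ m)) →
      HasFPowerSeriesAt (fun x : ℝ => ∑' m, c m * x ^ m) (ofScalars ℝ c) 0 := by
    intro c hc
    refine ⟨ENNReal.ofReal (ε/2), ?_, ENNReal.ofReal_pos.mpr h2, ?_⟩
    · have hsum : Summable (fun m => c m * (ε/2) ^ m) :=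
        hc (ε/2) (by rw [abs_of_pos h2]; linarith)
      have hfun : (fun m : ℕ => ‖ofScalars ℝ c m‖ * (((ε/2).toNNReal : ℝ)) ^ m)
          = fun m => ‖c m * (ε/2) ^ m‖ := by
        funext m
        rw [ofScalars_norm, Real.coe_toNNReal _ h2.le, norm_mul, norm_pow, Real.norm_eq_abs,
          Real.norm_eq_abs, abs_of_pos h2]
      have hbig := (hsum.tendsto_atTop_zero.isBigO_one ℝ).norm_left
      rw [← hfun] at hbig
      have := (ofScalars ℝ c).le_radius_of_isBigO hbig
      simpa [ENNReal.ofReal] using this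
    · intro y hy
      rw [mem_emetric_ball_zero_iff, ← ofReal_norm,
        ENNReal.ofReal_lt_ofReal_iff h2] at hy
      have hy2 : |y| < ε := by rw [← Real.norm_eq_abs]; linarith
      simp only [ofScalars_apply_eq, smul_eq_mul, zero_add]
      exact (hc y hy2).hasSum
  have hcs : ∀ x : ℝ, |x| < ε → Summable (fun m => c m * x ^ m) :=
    fun x hx => ((h x hx).choose_spec.1).summable
  have hds : ∀ x : ℝ, |x| < ε → Summable (fun m => d m * x ^ m) :=
    fun x hx => ((h x hx).choose_spec.2).summable
  have heq : (fun x : ℝ => ∑' m, c m * x ^ m) =ᶠ[nhds 0] (fun x => ∑' m, d m * x ^ m) := by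
    have hev : ∀ᶠ x : ℝ in nhds 0, |x| < ε := by
      simpa using eventually_abs_sub_lt (0:ℝ) hε
    filter_upwards [hev] with x hx
    obtain ⟨S, hS1, hS2⟩ := h x hx
    rw [hS1.tsum_eq, hS2.tsum_eq]
  exact ofScalars_series_injective ℝ ℝ
    ((key c hcs).eq_formalMultilinearSeries_of_eventually (key d hds) heq)

theorem stmt_14 (n : ℕ) (b : Fin n → ℝ) (hb : ∀ k, 0 ≤ b k)
    (hsum : 1 < ∑ k, b k)
    (r : ℝ) (hr : r ∈ Set.Ioo (0 : ℝ) 1)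
    (hroot : (∑ k, b k * r ^ ((k : ℕ) + 1)) = 1)
    (a : ℕ → ℕ) (P : Polynomial ℝ)
    (hP0 : P.eval 0 = 1)
    (hPne : ∀ x ∈ Set.Icc (0 : ℝ) r, P.eval x ≠ 0)
    (hrep : ∃ R : ℝ, 0 < R ∧ ∀ x : ℝ, |x| < R →
      HasSum (fun m => (a m : ℝ) * x ^ m)
        (P.eval x / ((x - 1) * ((∑ k, b k * x ^ ((k : ℕ) + 1)) - 1)))) :
    (∀ x : ℝ, |x| < r → Summable (fun m => (a m : ℝ) * x ^ m)) ∧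
    (∀ x : ℝ, r < |x| → ¬ Summable (fun m => (a m : ℝ) * x ^ m)) := by
  obtain ⟨R, hR0, hrepR⟩ := hrep
  set Q : Polynomial ℝ := ∑ k, Polynomial.C (b k) * Polynomial.X ^ ((k : ℕ) + 1) with hQdef
  have hQeval : ∀ x : ℝ, Q.eval x = ∑ k, b k * x ^ ((k : ℕ) + 1) := by
    intro x; rw [hQdef, Polynomial.eval_finset_sum]; simp
  have hQcoeff : ∀ m, 0 ≤ Q.coeff m := by
    intro m
    rw [hQdef, Polynomial.finset_sum_coeff]
    refine Finset.sum_nonneg fun k _ => ?_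
    rw [Polynomial.coeff_C_mul, Polynomial.coeff_X_pow]
    split <;> simp [hb k]
  have hQ0 : Q.coeff 0 = 0 := by
    rw [hQdef, Polynomial.finset_sum_coeff]
    refine Finset.sum_eq_zero fun k _ => ?_
    rw [Polynomial.coeff_C_mul, Polynomial.coeff_X_pow]
    simp
  obtain ⟨k0, hk0⟩ : ∃ k, 0 < b k := by
    by_contra hcon
    push_neg at hcon
    have : ∑ k, b k = 0 := Finset.sum_eq_zero fun k _ => le_antisymm (hcon k) (hb k)
    rw [this] at hsum; linarith
  have hQlt : ∀ t : ℝ, 0 ≤ t → t < r → Q.eval t < 1 := by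
    intro t ht0 htr
    rw [hQeval, ← hroot]
    refine Finset.sum_lt_sum (fun k _ => mul_le_mul_of_nonneg_left
      (pow_le_pow_left₀ ht0 htr.le _) (hb k)) ⟨k0, Finset.mem_univ _, ?_⟩
    exact mul_lt_mul_of_pos_left (pow_lt_pow_left₀ htr ht0 (Nat.succ_ne_zero _)) hk0
  set e : ℕ → ℝ := fun l => ∑ j ∈ Finset.range (l + 1), (Q ^ j).coeff l with he
  set cc : ℕ → ℝ := fun m => ∑ l ∈ Finset.range (m + 1), e l with hcc
  set A : ℕ → ℝ := fun m => ∑ kl ∈ Finset.HasAntidiagonal.antidiagonal m, P.coeff kl.1 * cc kl.2 with hA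
  have henn : ∀ l, 0 ≤ e l := fun l =>
    Finset.sum_nonneg fun j _ => pow_coeff_nonneg hQcoeff j l
  have main : ∀ x : ℝ, |x| < r →
      HasSum (fun m => A m * x ^ m)
        (P.eval x / ((x - 1) * ((∑ k, b k * x ^ ((k : ℕ) + 1)) - 1))) := by
    intro x hx
    have hx1 : |x| < 1 := hx.trans hr.2
    have hQx : Q.eval |x| < 1 := hQlt |x| (abs_nonneg x) hx
    have hEx : HasSum (fun l => e l * x ^ l) (1 - Q.eval x)⁻¹ :=
      e_hasSum hQcoeff hQ0 (le_refl |x|) hQx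
    have hEax : HasSum (fun l => e l * |x| ^ l) (1 - Q.eval |x|)⁻¹ :=
      e_hasSum hQcoeff hQ0 (le_of_eq (abs_abs x)) hQx
    have hgnorm : Summable fun l => ‖e l * x ^ l‖ := by
      refine hEax.summable.congr fun l => ?_
      rw [norm_mul, norm_pow, Real.norm_eq_abs, Real.norm_eq_abs, abs_of_nonneg (henn l)]
    have hfgeom : Summable fun i => ‖x ^ i‖ := by
      have habs2 : |(|x|)| < 1 := by rwa [abs_abs]
      simpa [norm_pow, Real.norm_eq_abs] using summable_geometric_of_abs_lt_one habs2
    have t1s := summable_norm_sum_mul_antidiagonal_of_summable_norm hfgeom hgnorm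
    have t1 := tsum_mul_tsum_eq_tsum_sum_antidiagonal_of_summable_norm hfgeom hgnorm
    have hterm1 : ∀ m : ℕ, (∑ kl ∈ Finset.HasAntidiagonal.antidiagonal m, x ^ kl.1 * (e kl.2 * x ^ kl.2))
        = cc m * x ^ m := by
      intro m
      have hc : ∀ kl ∈ Finset.HasAntidiagonal.antidiagonal m, x ^ kl.1 * (e kl.2 * x ^ kl.2)
          = e kl.2 * x ^ m := by
        intro kl hkl
        rw [Finset.HasAntidiagonal.mem_antidiagonal] at hkl
        rw [← hkl, pow_add]; ring
      rw [Finset.sum_congr rfl hc, ← Finset.sum_mul]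
      congr 1
      rw [Finset.Nat.sum_antidiagonal_eq_sum_range_succ (fun i j => e j)]
      simpa using Finset.sum_range_reflect e (m + 1)
    have hCsum : Summable fun m => ‖cc m * x ^ m‖ := by
      refine t1s.congr fun m => ?_
      rw [hterm1 m]
    have hCval : ∑' m, cc m * x ^ m = (1 - x)⁻¹ * (1 - Q.eval x)⁻¹ := by
      rw [tsum_congr (fun m => (hterm1 m).symm), ← t1, tsum_geometric_of_abs_lt_one hx1,
        hEx.tsum_eq]
    have hPnorm : Summable fun i => ‖P.coeff i * x ^ i‖ := by
      apply summable_of_ne_finset_zero (s := Finset.range (P.natDegree + 1))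
      intro m hm
      rw [P.coeff_eq_zero_of_natDegree_lt (by simpa [Nat.lt_succ, not_lt] using hm)]
      simp
    have t2s := summable_norm_sum_mul_antidiagonal_of_summable_norm hPnorm hCsum
    have t2 := tsum_mul_tsum_eq_tsum_sum_antidiagonal_of_summable_norm hPnorm hCsum
    have hterm2 : ∀ m : ℕ, (∑ kl ∈ Finset.HasAntidiagonal.antidiagonal m,
        (P.coeff kl.1 * x ^ kl.1) * (cc kl.2 * x ^ kl.2)) = A m * x ^ m := by
      intro m
      have hc : ∀ kl ∈ Finset.HasAntidiagonal.antidiagonal m, (P.coeff kl.1 * x ^ kl.1) * (cc kl.2 * x ^ kl.2)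
          = (P.coeff kl.1 * cc kl.2) * x ^ m := by
        intro kl hkl
        rw [Finset.HasAntidiagonal.mem_antidiagonal] at hkl
        rw [← hkl, pow_add]; ring
      rw [Finset.sum_congr rfl hc, ← Finset.sum_mul]
    have hAval : ∑' m, A m * x ^ m = P.eval x * ((1 - x)⁻¹ * (1 - Q.eval x)⁻¹) := by
      rw [tsum_congr (fun m => (hterm2 m).symm), ← t2, (poly_hasSum P x).tsum_eq, hCval]
    have hAs : Summable fun m => A m * x ^ m :=
      (t2s.of_norm).congr fun m => hterm2 m
    have hfinal : P.eval x * ((1 - x)⁻¹ * (1 - Q.eval x)⁻¹)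
        = P.eval x / ((x - 1) * ((∑ k, b k * x ^ ((k : ℕ) + 1)) - 1)) := by
      rw [← hQeval x, show (x - 1) * (Q.eval x - 1) = (1 - x) * (1 - Q.eval x) by ring,
        div_eq_mul_inv, mul_inv]
    rw [← hfinal, ← hAval]
    exact hAs.hasSum
  have hAeq : (fun m => (a m : ℝ)) = A := by
    have hε : 0 < min R r := lt_min hR0 hr.1
    refine coeff_unique hε fun x hx => ?_
    exact ⟨_, hrepR x (hx.trans_le (min_le_left _ _)),
      main x (hx.trans_le (min_le_right _ _))⟩
  constructor
  · intro x hx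
    exact (main x hx).summable.congr fun m => by rw [← congrFun hAeq m]
  · intro x hx hS
    have hx0 : 0 < |x| := lt_trans hr.1 hx
    have htend := hS.tendsto_atTop_zero
    have hev : ∀ᶠ m in Filter.atTop, |(a m : ℝ) * x ^ m| ≤ 1 := by
      filter_upwards [htend.eventually (eventually_abs_sub_lt (0:ℝ) one_pos)] with m hm
      simpa using hm.le
    have hgeo : Summable fun m => (r / |x|) ^ m :=
      summable_geometric_of_lt_one (div_nonneg hr.1.le (abs_nonneg x)) (by rw [div_lt_one hx0]; exact hx)
    have hSr : Summable fun m => (a m : ℝ) * r ^ m := by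
      refine Summable.of_norm_bounded_eventually_nat hgeo ?_
      filter_upwards [hev] with m hm
      have hxm : |x| ^ m ≠ 0 := pow_ne_zero m (ne_of_gt hx0)
      calc ‖(a m : ℝ) * r ^ m‖ = (a m : ℝ) * r ^ m :=
            Real.norm_of_nonneg (mul_nonneg (Nat.cast_nonneg _) (pow_nonneg hr.1.le m))
        _ = |(a m : ℝ) * x ^ m| * (r / |x|) ^ m := by
            rw [abs_mul, abs_pow, Nat.abs_cast, div_pow]
            field_simp
        _ ≤ 1 * (r / |x|) ^ m := mul_le_mul_of_nonneg_right hm (pow_nonneg (div_nonneg hr.1.le (abs_nonneg x)) m)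
        _ = (r / |x|) ^ m := one_mul _
    set M := ∑' m, (a m : ℝ) * r ^ m with hM
    have hM0 : 0 ≤ M := tsum_nonneg fun m =>
      mul_nonneg (Nat.cast_nonneg _) (pow_nonneg hr.1.le m)
    have hbound : ∀ u : ℝ, 0 ≤ u → u < r →
        P.eval u / ((u - 1) * ((∑ k, b k * u ^ ((k : ℕ) + 1)) - 1)) ≤ M := by
      intro u hu0 hur
      have hmu := main u (by rwa [abs_of_nonneg hu0])
      rw [← hmu.tsum_eq]
      refine hmu.summable.tsum_le_tsum (fun m => ?_) hSr
      rw [← congrFun hAeq m]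
      exact mul_le_mul_of_nonneg_left (pow_le_pow_left₀ hu0 hur.le m) (Nat.cast_nonneg _)
    have hPpos : 0 < P.eval r := by
      rcases lt_or_ge 0 (P.eval r) with h | h
      · exact h
      · exfalso
        have hsub : (0:ℝ) ∈ Set.Icc (P.eval r) (P.eval 0) := ⟨h, by rw [hP0]; norm_num⟩
        obtain ⟨z, hz, hz0⟩ :=
          intermediate_value_Icc' hr.1.le (P.continuous.continuousOn) hsub
        exact hPne z hz hz0
    set G : ℝ → ℝ := fun u => (u - 1) * ((∑ k, b k * u ^ ((k : ℕ) + 1)) - 1) with hGdef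
    have hGQ : ∀ u, G u = (u - 1) * (Q.eval u - 1) := fun u => by rw [hGdef, hQeval]
    have hGcont : Continuous G := by
      rw [show G = fun u => (u - 1) * (Q.eval u - 1) from funext hGQ]
      exact (continuous_id.sub continuous_const).mul (Q.continuous.sub continuous_const)
    have hGr : G r = 0 := by rw [hGdef]; simp only [hroot]; ring
    set ε0 := (P.eval r / 2) / (M + 1) with hε0
    have hε0pos : 0 < ε0 := div_pos (by linarith) (by linarith)
    obtain ⟨δ1, hδ1pos, hδ1⟩ := Metric.continuousAt_iff.mp (hGcont.continuousAt (x := r)) ε0 hε0pos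
    obtain ⟨δ2, hδ2pos, hδ2⟩ := Metric.continuousAt_iff.mp (P.continuous.continuousAt (x := r))
      (P.eval r / 2) (show (0:ℝ) < P.eval r / 2 by linarith)
    set δ := min δ1 δ2 with hδ
    have hδpos : 0 < δ := lt_min hδ1pos hδ2pos
    set u := max (r / 2) (r - δ / 2) with hu
    have hu0 : 0 ≤ u := le_trans (by linarith [hr.1]) (le_max_left _ _)
    have hur : u < r := max_lt (by linarith [hr.1]) (by linarith)
    have hru : r - u ≤ δ / 2 := by
      have := le_max_right (r / 2) (r - δ / 2)
      rw [← hu] at this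
      linarith
    have hdist : dist u r < δ := by
      rw [Real.dist_eq, abs_sub_comm, abs_of_nonneg (by linarith)]
      linarith
    have hGu_small : |G u| < ε0 := by
      have h1 := hδ1 (lt_of_lt_of_le hdist (min_le_left _ _))
      rwa [Real.dist_eq, hGr, sub_zero] at h1
    have hPu : P.eval r / 2 < P.eval u := by
      have h1 := hδ2 (lt_of_lt_of_le hdist (min_le_right _ _))
      rw [Real.dist_eq] at h1
      have := abs_lt.mp h1
      linarith [this.1, this.2]
    have hGupos : 0 < G u := by
      rw [hGQ]
      have h1 : u - 1 < 0 := by have := hr.2; linarith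
      have h2 : Q.eval u - 1 < 0 := by have := hQlt u hu0 hur; linarith
      exact mul_pos_of_neg_of_neg h1 h2
    have hGu_lt : G u < ε0 := lt_of_le_of_lt (le_abs_self _) hGu_small
    have key1 : P.eval u / G u ≤ M := hbound u hu0 hur
    have key2 : M + 1 < P.eval u / G u := by
      have hPr2 : P.eval r / 2 ≠ 0 := by positivity
      have hM1 : M + 1 ≠ 0 := by linarith
      have hh : (P.eval r / 2) / ε0 = M + 1 := by
        rw [hε0]
        field_simp
      have h3 : (P.eval r / 2) / ε0 < (P.eval r / 2) / G u :=
        div_lt_div_of_pos_left (by linarith) hGupos hGu_lt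
      have h4 : (P.eval r / 2) / G u ≤ P.eval u / G u := by gcongr
      linarith
    linarith
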